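/- Let V be a real normed vector space, E ⊆ V a nonempty open convex set, and let φ : E → ℝ and ψ_u : E → ℝ (u = 1,…,t) be convex at p̄ and directionally differentiable at p̄, where p̄ ∈ F = {p ∈ E : ψ_u(p) ≤ 0 for all u}. Suppose there exist scalars μ_u ≥ 0 (u = 1,…,t) such that φ'(p̄; p − p̄) + Σ_{u=1}^t μ_u ψ_u'(p̄; p − p̄) ≥ 0 for all p ∈ E, and μ_u ψ_u(p̄) = 0 for all u. Then p̄ is an optimal solution of the problem of minimizing φ over F, i.e. φ(p̄) ≤ φ(p) for every p ∈ F. -/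
import Mathlib


/-- One-sided directional derivative of `f` at `p` in direction `w`, with value `d`. -/
def HasDirDeriv {V : Type*} [NormedAddCommGroup V] [NormedSpace ℝ V]
    (f : V → ℝ) (p w : V) (d : ℝ) : Prop :=
  Filter.Tendsto (fun α : ℝ => (f (p + α • w) - f p) / α)
    (nhdsWithin 0 (Set.Ioi 0)) (nhds d)

/-- `f` is convex at the point `p` (relative to the convex set `E`). -/
def ConvexAtPt {V : Type*} [NormedAddCommGroup V] [NormedSpace ℝ V]
    (E : Set V) (f : V → ℝ) (p : V) : Prop :=
  ∀ q ∈ E, ∀ α : ℝ, 0 ≤ α → α ≤ 1 →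
    f ((1 - α) • p + α • q) ≤ (1 - α) * f p + α * f q

lemma dirDeriv_le_of_convexAt {V : Type*} [NormedAddCommGroup V] [NormedSpace ℝ V]
    {E : Set V} {f : V → ℝ} {pbar p : V} {d : ℝ}
    (hc : ConvexAtPt E f pbar) (hp : p ∈ E)
    (hd : HasDirDeriv f pbar (p - pbar) d) : d ≤ f p - f pbar := by
  refine le_of_tendsto hd ?_
  filter_upwards [nhdsWithin_le_nhds (Iio_mem_nhds one_pos),
    self_mem_nhdsWithin] with α hα1 hα0
  have hα0' : (0:ℝ) < α := hα0
  have hα1' : α ≤ 1 := le_of_lt hα1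
  have key : f (pbar + α • (p - pbar)) ≤ f pbar + α * (f p - f pbar) := by
    have := hc p hp α hα0'.le hα1'
    have heq : (1 - α) • pbar + α • p = pbar + α • (p - pbar) := by
      simp [smul_sub, sub_smul]; abel
    rw [heq] at this
    linarith [this]
  rw [div_le_iff₀ hα0']
  linarith [key]

/-- Theorem 3.1, Euclidean case: KKT sufficiency for the
real-valued problem (RVOP). -/
theorem kkt_sufficiency_rvop
    {V : Type*} [NormedAddCommGroup V] [NormedSpace ℝ V]
    (E : Set V) (hEne : E.Nonempty) (hEopen : IsOpen E) (hEconv : Convex ℝ E)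
    (t : ℕ) (φ : V → ℝ) (ψ : Fin t → V → ℝ)
    (pbar : V) (hpbarE : pbar ∈ E) (hpbarF : ∀ u, ψ u pbar ≤ 0)
    (φ' : V → ℝ) (hφd : ∀ w, HasDirDeriv φ pbar w (φ' w))
    (ψ' : Fin t → V → ℝ) (hψd : ∀ u w, HasDirDeriv (ψ u) pbar w (ψ' u w))
    (hφc : ConvexAtPt E φ pbar) (hψc : ∀ u, ConvexAtPt E (ψ u) pbar)
    (μ : Fin t → ℝ) (hμ : ∀ u, 0 ≤ μ u)
    (hkkt : ∀ p ∈ E, 0 ≤ φ' (p - pbar) + ∑ u, μ u * ψ' u (p - pbar))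
    (hcs : ∀ u, μ u * ψ u pbar = 0) :
    ∀ p ∈ E, (∀ u, ψ u p ≤ 0) → φ pbar ≤ φ p := by
  intro p hp hψp
  have hφle : φ' (p - pbar) ≤ φ p - φ pbar :=
    dirDeriv_le_of_convexAt hφc hp (hφd _)
  have hψle : ∀ u, ψ' u (p - pbar) ≤ ψ u p - ψ u pbar := fun u =>
    dirDeriv_le_of_convexAt (hψc u) hp (hψd u _)
  have hsum : ∑ u, μ u * ψ' u (p - pbar) ≤ ∑ u, μ u * (ψ u p - ψ u pbar) :=
    Finset.sum_le_sum fun u _ => mul_le_mul_of_nonneg_left (hψle u) (hμ u)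
  have hsum2 : ∑ u, μ u * (ψ u p - ψ u pbar) ≤ 0 := by
    apply Finset.sum_nonpos
    intro u _
    have := hcs u
    have h1 : μ u * ψ u p ≤ 0 := mul_nonpos_of_nonneg_of_nonpos (hμ u) (hψp u)
    rw [mul_sub]
    linarith
  have := hkkt p hp
  linarith
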